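/- Let G = (V,E) be a connected, locally finite simple graph, x ∈ V a fixed base vertex, and u : V → ℝ harmonic. Let 0 ≤ a ≤ b be integers and suppose G is locally expansive in {v ∈ V : a ≤ d(x,v) ≤ b}, i.e. d_out(v) ≥ d_in(v) for all vertices v with a ≤ d(x,v) ≤ b. Then ∑_{y : d(x,y)=b+1} d_in(y)·u(y)² ≥ (b − a + 1)·N(a) + ∑_{y : d(x,y)=a} d_out(y)·u(y)². -/

import Mathlib

/-- In-degree of `v` relative to base vertex `x`: the number of neighbors of `v`
whose distance to `x` is one less than that of `v`. -/
noncomputable def din {V : Type*} (G : SimpleGraph V) (x v : V) : ℕ :=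
  {w | G.Adj v w ∧ G.dist x w = G.dist x v - 1}.ncard

/-- Out-degree of `v` relative to base vertex `x`: the number of neighbors of `v`
whose distance to `x` is one more than that of `v`. -/
noncomputable def dout {V : Type*} (G : SimpleGraph V) (x v : V) : ℕ :=
  {w | G.Adj v w ∧ G.dist x w = G.dist x v + 1}.ncard

/-- `u` is harmonic: at every vertex the sum of differences over neighbors vanishes. -/
def GraphHarmonic {V : Type*} (G : SimpleGraph V) (u : V → ℝ) : Prop :=
  ∀ v : V, ∑ᶠ y ∈ G.neighborSet v, (u y - u v) = 0

/-- The discrete Almgren quantity `N(k)`. -/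
noncomputable def almgrenN {V : Type*} (G : SimpleGraph V) (x : V) (u : V → ℝ) (k : ℕ) : ℝ :=
  (∑ᶠ y ∈ {y | G.dist x y = k + 1}, (din G x y : ℝ) * u y ^ 2) -
    ∑ᶠ y ∈ {y | G.dist x y = k}, (dout G x y : ℝ) * u y ^ 2

open SimpleGraph Finset

attribute [local instance] Classical.propDecidable

namespace DoublingAux

variable {V : Type*} (G : SimpleGraph V)

lemma adj_dist_le (hconn : G.Connected) (x v w : V) (h : G.Adj v w) :
    G.dist x w ≤ G.dist x v + 1 := by
  have h1 : G.dist v w = 1 := (SimpleGraph.dist_eq_one_iff_adj).2 h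
  calc G.dist x w ≤ G.dist x v + G.dist v w := hconn.dist_triangle
    _ = G.dist x v + 1 := by rw [h1]

lemma exists_pred (hconn : G.Connected) (x v : V) (k : ℕ) (h : G.dist x v = k + 1) :
    ∃ w, G.Adj v w ∧ G.dist x w = k := by
  obtain ⟨p, hp⟩ := (hconn v x).exists_walk_length_eq_dist
  rw [SimpleGraph.dist_comm] at hp
  have hnil : ¬ p.Nil := by
    rw [SimpleGraph.Walk.not_nil_iff_lt_length]
    omega
  refine ⟨p.getVert 1, p.adj_snd hnil, ?_⟩
  have hle : G.dist x (p.getVert 1) ≤ k := by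
    have := SimpleGraph.dist_le p.tail
    have hlen := SimpleGraph.Walk.length_tail_add_one hnil
    rw [SimpleGraph.dist_comm]
    exact le_trans this (by omega)
  have hge : k + 1 ≤ G.dist x (p.getVert 1) + 1 := by
    rw [← h]
    exact adj_dist_le G hconn x (p.getVert 1) v ((p.adj_snd hnil).symm)
  omega

lemma sphere_finite (hconn : G.Connected) (hlf : ∀ v : V, (G.neighborSet v).Finite)
    (x : V) (k : ℕ) : {y | G.dist x y = k}.Finite := by
  induction k with
  | zero =>
    have : {y | G.dist x y = 0} = {x} := by
      ext y
      simp [hconn.dist_eq_zero_iff, eq_comm]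
    rw [this]; exact Set.finite_singleton x
  | succ k ih =>
    have hsub : {y | G.dist x y = k + 1} ⊆ ⋃ w ∈ {y | G.dist x y = k}, G.neighborSet w := by
      intro y hy
      obtain ⟨w, hadj, hw⟩ := exists_pred G hconn x y k hy
      exact Set.mem_biUnion hw hadj.symm
    exact (ih.biUnion fun w _ => hlf w).subset hsub

variable (hconn : G.Connected) (hlf : ∀ v : V, (G.neighborSet v).Finite) (x : V)

/-- sphere finset -/
noncomputable def S (k : ℕ) : Finset V := (sphere_finite G hconn hlf x k).toFinset

/-- neighbors of `v` at distance `m` from `x` -/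
noncomputable def T (v : V) (m : ℕ) : Finset V :=
  (hlf v).toFinset.filter (fun w => G.dist x w = m)

lemma mem_S {k : ℕ} {y : V} : y ∈ S G hconn hlf x k ↔ G.dist x y = k := by
  simp [S]

lemma mem_T {v w : V} {m : ℕ} : w ∈ T G hlf x v m ↔ G.Adj v w ∧ G.dist x w = m := by
  simp [T]

lemma finsum_sphere (k : ℕ) (f : V → ℝ) :
    ∑ᶠ y ∈ {y | G.dist x y = k}, f y = ∑ y ∈ S G hconn hlf x k, f y :=
  finsum_mem_eq_finite_toFinset_sum f (sphere_finite G hconn hlf x k)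

lemma din_mul {v : V} {k : ℕ} (hv : G.dist x v = k + 1) (c : ℝ) :
    (din G x v : ℝ) * c = ∑ _w ∈ T G hlf x v k, c := by
  have hset : {w | G.Adj v w ∧ G.dist x w = G.dist x v - 1} = ↑(T G hlf x v k) := by
    ext w
    rw [Finset.mem_coe, mem_T, hv]
    simp
  rw [din, hset, Set.ncard_coe_finset, Finset.sum_const, nsmul_eq_mul]

lemma dout_mul {v : V} {k : ℕ} (hv : G.dist x v = k) (c : ℝ) :
    (dout G x v : ℝ) * c = ∑ _w ∈ T G hlf x v (k + 1), c := by
  have hset : {w | G.Adj v w ∧ G.dist x w = G.dist x v + 1} = ↑(T G hlf x v (k + 1)) := by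
    ext w
    rw [Finset.mem_coe, mem_T, hv]
    rfl
  rw [dout, hset, Set.ncard_coe_finset, Finset.sum_const, nsmul_eq_mul]

lemma Sin_eq (u : V → ℝ) (k : ℕ) :
    ∑ᶠ y ∈ {y | G.dist x y = k + 1}, (din G x y : ℝ) * u y ^ 2 =
      ∑ v ∈ S G hconn hlf x (k + 1), ∑ _w ∈ T G hlf x v k, u v ^ 2 := by
  rw [finsum_sphere G hconn hlf x (k + 1)]
  refine Finset.sum_congr rfl fun v hv => ?_
  exact din_mul G hlf x ((mem_S G hconn hlf x).1 hv) _

lemma Sout_eq (u : V → ℝ) (k : ℕ) :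
    ∑ᶠ y ∈ {y | G.dist x y = k}, (dout G x y : ℝ) * u y ^ 2 =
      ∑ v ∈ S G hconn hlf x k, ∑ _w ∈ T G hlf x v (k + 1), u v ^ 2 := by
  rw [finsum_sphere G hconn hlf x k]
  refine Finset.sum_congr rfl fun v hv => ?_
  exact dout_mul G hlf x ((mem_S G hconn hlf x).1 hv) _

lemma swap (k m : ℕ) (F : V → V → ℝ) :
    ∑ v ∈ S G hconn hlf x k, ∑ w ∈ T G hlf x v m, F v w =
      ∑ w ∈ S G hconn hlf x m, ∑ v ∈ T G hlf x w k, F v w := by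
  refine Finset.sum_comm' fun v w => ?_
  rw [mem_S, mem_S, mem_T, mem_T]
  constructor
  · rintro ⟨h1, h2, h3⟩; exact ⟨⟨h2.symm, h1⟩, h3⟩
  · rintro ⟨⟨h2, h1⟩, h3⟩; exact ⟨h1, h2.symm, h3⟩


lemma same_cancel (u : V → ℝ) (k : ℕ) :
    ∑ v ∈ S G hconn hlf x k, ∑ w ∈ T G hlf x v k, (u w ^ 2 - u v ^ 2) = 0 := by
  have h := swap G hconn hlf x k k (fun v w => u w ^ 2 - u v ^ 2)
  have h2 : ∑ w ∈ S G hconn hlf x k, ∑ v ∈ T G hlf x w k, (u w ^ 2 - u v ^ 2) =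
      - ∑ v ∈ S G hconn hlf x k, ∑ w ∈ T G hlf x v k, (u w ^ 2 - u v ^ 2) := by
    rw [← Finset.sum_neg_distrib]
    refine Finset.sum_congr rfl fun v _ => ?_
    rw [← Finset.sum_neg_distrib]
    refine Finset.sum_congr rfl fun w _ => ?_
    ring
  rw [h2] at h
  linarith

lemma N_eq (u : V → ℝ) (k : ℕ) :
    almgrenN G x u k =
      ∑ v ∈ S G hconn hlf x (k + 1), ∑ w ∈ T G hlf x v k, (u v ^ 2 - u w ^ 2) := by
  rw [almgrenN, Sin_eq G hconn hlf x u k, Sout_eq G hconn hlf x u k,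
    swap G hconn hlf x k (k + 1) (fun v _w => u v ^ 2)]
  rw [← Finset.sum_sub_distrib]
  refine Finset.sum_congr rfl fun v _ => ?_
  rw [← Finset.sum_sub_distrib]

include hconn in
lemma nbr_partition {v : V} {k : ℕ} (hv : G.dist x v = k + 1) (f : V → ℝ) :
    ∑ w ∈ (hlf v).toFinset, f w =
      (∑ w ∈ T G hlf x v k, f w) + (∑ w ∈ T G hlf x v (k + 1), f w) +
        ∑ w ∈ T G hlf x v (k + 2), f w := by
  have hU : (hlf v).toFinset =
      (T G hlf x v k ∪ T G hlf x v (k + 1)) ∪ T G hlf x v (k + 2) := by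
    ext w
    simp only [Finset.mem_union, mem_T, Set.Finite.mem_toFinset, SimpleGraph.mem_neighborSet]
    constructor
    · intro hadj
      have h1 := adj_dist_le G hconn x v w hadj
      have h2 := adj_dist_le G hconn x w v hadj.symm
      rw [hv] at h1 h2
      rcases (by omega : G.dist x w = k ∨ G.dist x w = k + 1 ∨ G.dist x w = k + 2) with
        h | h | h
      · exact Or.inl (Or.inl ⟨hadj, h⟩)
      · exact Or.inl (Or.inr ⟨hadj, h⟩)
      · exact Or.inr ⟨hadj, h⟩
    · rintro ((⟨h, _⟩ | ⟨h, _⟩) | ⟨h, _⟩) <;> exact h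
  have hd1 : Disjoint (T G hlf x v k) (T G hlf x v (k + 1)) := by
    rw [Finset.disjoint_left]
    intro w hw hw'
    rw [mem_T] at hw hw'
    omega
  have hd2 : Disjoint (T G hlf x v k ∪ T G hlf x v (k + 1)) (T G hlf x v (k + 2)) := by
    rw [Finset.disjoint_left]
    intro w hw hw'
    rw [Finset.mem_union, mem_T, mem_T] at hw
    rw [mem_T] at hw'
    omega
  rw [hU, Finset.sum_union hd2, Finset.sum_union hd1]

lemma harmonic_sq (u : V → ℝ) (hu : GraphHarmonic G u) (v : V) :
    ∑ w ∈ (hlf v).toFinset, (u w ^ 2 - u v ^ 2) =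
      ∑ w ∈ (hlf v).toFinset, (u w - u v) ^ 2 := by
  have h0 : ∑ w ∈ (hlf v).toFinset, (u w - u v) = 0 := by
    have := hu v
    rwa [← (hlf v).coe_toFinset, finsum_mem_coe_finset] at this
  have key : ∑ w ∈ (hlf v).toFinset, ((u w ^ 2 - u v ^ 2) - (u w - u v) ^ 2) = 0 := by
    have : ∀ w, (u w ^ 2 - u v ^ 2) - (u w - u v) ^ 2 = 2 * u v * (u w - u v) := by
      intro w; ring
    simp_rw [this, ← Finset.mul_sum, h0, mul_zero]
  rw [Finset.sum_sub_distrib] at key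
  linarith

include hconn hlf in
lemma N_mono (u : V → ℝ) (hu : GraphHarmonic G u) (k : ℕ) :
    almgrenN G x u k ≤ almgrenN G x u (k + 1) := by
  have key : ∑ v ∈ S G hconn hlf x (k + 1), ∑ w ∈ (hlf v).toFinset, (u w ^ 2 - u v ^ 2) =
      ∑ v ∈ S G hconn hlf x (k + 1), ∑ w ∈ (hlf v).toFinset, (u w - u v) ^ 2 :=
    Finset.sum_congr rfl fun v _ => harmonic_sq G hlf u hu v
  have hsplit : ∑ v ∈ S G hconn hlf x (k + 1), ∑ w ∈ (hlf v).toFinset, (u w ^ 2 - u v ^ 2) =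
      (∑ v ∈ S G hconn hlf x (k + 1), ∑ w ∈ T G hlf x v k, (u w ^ 2 - u v ^ 2)) +
      (∑ v ∈ S G hconn hlf x (k + 1), ∑ w ∈ T G hlf x v (k + 1), (u w ^ 2 - u v ^ 2)) +
      ∑ v ∈ S G hconn hlf x (k + 1), ∑ w ∈ T G hlf x v (k + 2), (u w ^ 2 - u v ^ 2) := by
    rw [← Finset.sum_add_distrib, ← Finset.sum_add_distrib]
    refine Finset.sum_congr rfl fun v hv => ?_
    exact nbr_partition G hconn hlf x ((mem_S G hconn hlf x).1 hv) _
  have hin : ∑ v ∈ S G hconn hlf x (k + 1), ∑ w ∈ T G hlf x v k, (u w ^ 2 - u v ^ 2) =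
      - almgrenN G x u k := by
    rw [N_eq G hconn hlf x u k, ← Finset.sum_neg_distrib]
    refine Finset.sum_congr rfl fun v _ => ?_
    rw [← Finset.sum_neg_distrib]
    refine Finset.sum_congr rfl fun w _ => by ring
  have hsame := same_cancel G hconn hlf x u (k + 1)
  have hout : ∑ v ∈ S G hconn hlf x (k + 1), ∑ w ∈ T G hlf x v (k + 2), (u w ^ 2 - u v ^ 2) =
      almgrenN G x u (k + 1) := by
    rw [swap G hconn hlf x (k + 1) (k + 2) (fun v w => u w ^ 2 - u v ^ 2),
      N_eq G hconn hlf x u (k + 1)]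
  have hQ : 0 ≤ ∑ v ∈ S G hconn hlf x (k + 1), ∑ w ∈ (hlf v).toFinset, (u w - u v) ^ 2 :=
    Finset.sum_nonneg fun v _ => Finset.sum_nonneg fun w _ => sq_nonneg _
  rw [hsplit, hin, hsame, hout] at key
  linarith

include hconn hlf in
lemma N_mono_le (u : V → ℝ) (hu : GraphHarmonic G u) {k m : ℕ} (h : k ≤ m) :
    almgrenN G x u k ≤ almgrenN G x u m := by
  induction m, h using Nat.le_induction with
  | base => exact le_refl _
  | succ m _ ih => exact le_trans ih (N_mono G hconn hlf x u hu m)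


include hconn hlf in
lemma step_exp (u : V → ℝ) (a b k : ℕ)
    (hexp : ∀ v : V, a ≤ G.dist x v → G.dist x v ≤ b → din G x v ≤ dout G x v)
    (h1 : a ≤ k + 1) (h2 : k + 1 ≤ b) :
    (∑ᶠ y ∈ {y | G.dist x y = k + 1}, (din G x y : ℝ) * u y ^ 2) ≤
      ∑ᶠ y ∈ {y | G.dist x y = k + 1}, (dout G x y : ℝ) * u y ^ 2 := by
  rw [finsum_sphere G hconn hlf x (k + 1), finsum_sphere G hconn hlf x (k + 1)]
  refine Finset.sum_le_sum fun v hv => ?_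
  have hd : G.dist x v = k + 1 := (mem_S G hconn hlf x).1 hv
  have hle : din G x v ≤ dout G x v := hexp v (by omega) (by omega)
  exact mul_le_mul_of_nonneg_right (by exact_mod_cast hle) (sq_nonneg _)

include hconn hlf in
lemma main_aux (u : V → ℝ) (hu : GraphHarmonic G u) (a b : ℕ) (hab : a ≤ b)
    (hexp : ∀ v : V, a ≤ G.dist x v → G.dist x v ≤ b → din G x v ≤ dout G x v) :
    ((b - a + 1 : ℕ) : ℝ) * almgrenN G x u a +
        (∑ᶠ y ∈ {y | G.dist x y = a}, (dout G x y : ℝ) * u y ^ 2) ≤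
      ∑ᶠ y ∈ {y | G.dist x y = b + 1}, (din G x y : ℝ) * u y ^ 2 := by
  induction b, hab using Nat.le_induction with
  | base =>
    have h1 : (a - a + 1 : ℕ) = 1 := by omega
    rw [h1, Nat.cast_one, one_mul, almgrenN]
    linarith
  | succ b hb ih =>
    have hexp' : ∀ v : V, a ≤ G.dist x v → G.dist x v ≤ b → din G x v ≤ dout G x v :=
      fun v hv1 hv2 => hexp v hv1 (by omega)
    have IH := ih hexp'
    have hN : almgrenN G x u a ≤ almgrenN G x u (b + 1) :=
      N_mono_le G hconn hlf x u hu (by omega)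
    have hSo := step_exp G hconn hlf x u a (b + 1) b hexp (by omega) (by omega)
    have hdef : almgrenN G x u (b + 1) =
        (∑ᶠ y ∈ {y | G.dist x y = b + 1 + 1}, (din G x y : ℝ) * u y ^ 2) -
          ∑ᶠ y ∈ {y | G.dist x y = b + 1}, (dout G x y : ℝ) * u y ^ 2 := rfl
    have hcast : ((b + 1 - a + 1 : ℕ) : ℝ) = ((b - a + 1 : ℕ) : ℝ) + 1 := by
      have : (b + 1 - a + 1 : ℕ) = (b - a + 1) + 1 := by omega
      rw [this, Nat.cast_add, Nat.cast_one]
    rw [hcast]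
    have hring : (((b - a + 1 : ℕ) : ℝ) + 1) * almgrenN G x u a =
        ((b - a + 1 : ℕ) : ℝ) * almgrenN G x u a + almgrenN G x u a := by ring
    rw [hring]
    linarith

end DoublingAux

theorem doubling_expansive {V : Type*} (G : SimpleGraph V) (hconn : G.Connected)
    (hlf : ∀ v : V, (G.neighborSet v).Finite) (x : V) (u : V → ℝ)
    (hu : GraphHarmonic G u) (a b : ℕ) (hab : a ≤ b)
    (hexp : ∀ v : V, a ≤ G.dist x v → G.dist x v ≤ b → din G x v ≤ dout G x v) :
    (∑ᶠ y ∈ {y | G.dist x y = b + 1}, (din G x y : ℝ) * u y ^ 2) ≥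
      ((b - a + 1 : ℕ) : ℝ) * almgrenN G x u a +
        ∑ᶠ y ∈ {y | G.dist x y = a}, (dout G x y : ℝ) * u y ^ 2 :=
  DoublingAux.main_aux G hconn hlf x u hu a b hab hexp
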